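/- Let A and B be two countable subsets of ordinals, each closed (i.e., containing the suprema of all its nonempty bounded subsets that have limit order type), such that A ∩ B is an initial segment of both A and B. Define an equivalence relation on A: for x ≤ y in A, x ∼ y iff either [x,y] ∩ B = ∅ or [x,y] ∩ B ⊇ [x,y] ∩ A, and similarly on B. Then the ordered decompositions of A and of B into equivalence classes each have finitely many classes. -/

import Mathlib

open Set

/-- A set of ordinals is (topologically) closed: it contains the supremum of each of its
nonempty bounded subsets. -/
def OrdClosed (A : Set Ordinal) : Prop :=
  ∀ s ⊆ A, s.Nonempty → BddAbove s → sSup s ∈ A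

/-- `I` is an initial segment of `A`. -/
def InitSegOf (I A : Set Ordinal) : Prop :=
  I ⊆ A ∧ ∀ x ∈ A, ∀ y ∈ I, x ≤ y → x ∈ I

/-- The equivalence relation of Lemma 5: for `x ≤ y` in `A`, `x ∼ y` iff either
`[x,y] ∩ B = ∅` or `[x,y] ∩ B ⊇ [x,y] ∩ A` (stated symmetrically via `min`/`max`). -/
def Sim (A B : Set Ordinal) (x y : Ordinal) : Prop :=
  Set.Icc (min x y) (max x y) ∩ B = ∅ ∨ Set.Icc (min x y) (max x y) ∩ A ⊆ B

lemma sim_iff (A B : Set Ordinal) (x y : Ordinal) :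
    Sim A B x y ↔ (uIcc x y ∩ B = ∅ ∨ uIcc x y ∩ A ⊆ B) := by
  rw [Sim, uIcc]

lemma aux5 (A B : Set Ordinal) (hAc : A.Countable)
    (hAcl : OrdClosed A) (hBcl : OrdClosed B)
    (hA : InitSegOf (A ∩ B) A) :
    {s : Set Ordinal | ∃ a ∈ A, s = {b ∈ A | Sim A B a b}}.Finite := by
  classical
  set cls : Ordinal → Set Ordinal := fun a => {b ∈ A | Sim A B a b} with hcls
  -- classes of elements of A ∩ B are all equal to A ∩ B
  have fact_cross : ∀ a ∈ A \ B, ∀ b ∈ B, ¬ Sim A B a b := by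
    rintro a ⟨haA, haB⟩ b hbB hs
    rcases (sim_iff A B a b).1 hs with h | h
    · exact absurd h (Nonempty.ne_empty ⟨b, right_mem_uIcc, hbB⟩)
    · exact haB (h ⟨left_mem_uIcc, haA⟩)
  have fact_in : ∀ a ∈ A ∩ B, cls a = A ∩ B := by
    rintro a ⟨haA, haB⟩
    ext b
    simp only [hcls, mem_setOf_eq, mem_inter_iff]
    constructor
    · rintro ⟨hbA, hsim⟩
      refine ⟨hbA, ?_⟩
      by_contra hbB
      exact fact_cross b ⟨hbA, hbB⟩ a haB ((sim_iff A B b a).2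
        (by rw [uIcc_comm]; exact (sim_iff A B a b).1 hsim))
    · rintro ⟨hbA, hbB⟩
      refine ⟨hbA, (sim_iff A B a b).2 (Or.inr ?_)⟩
      rintro c ⟨hc, hcA⟩
      have hmax : max a b ∈ A ∩ B := by
        rcases max_cases a b with ⟨h, _⟩ | ⟨h, _⟩ <;> rw [h]
        exacts [⟨haA, haB⟩, ⟨hbA, hbB⟩]
      have hcle : c ≤ max a b := by
        have := (mem_Icc.1 (by rwa [uIcc] at hc)).2
        exact this
      exact (hA.2 c hcA (max a b) hmax hcle).2
  have fact_free : ∀ a ∈ A \ B, ∀ b ∈ A \ B, (Sim A B a b ↔ uIcc a b ∩ B = ∅) := by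
    rintro a ⟨haA, haB⟩ b hb
    rw [sim_iff]
    constructor
    · rintro (h | h)
      · exact h
      · exact absurd (h ⟨left_mem_uIcc, haA⟩) haB
    · exact Or.inl
  have fact_trans : ∀ a ∈ A \ B, ∀ a' ∈ A \ B, Sim A B a a' → cls a = cls a' := by
    have key : ∀ a ∈ A \ B, ∀ a' ∈ A \ B, Sim A B a a' → ∀ c ∈ A, Sim A B a c → Sim A B a' c := by
      intro a ha a' ha' hs c hcA hsc
      by_cases hcB : c ∈ B
      · exact absurd hsc (fact_cross a ha c hcB)
      · have h1 : uIcc a a' ∩ B = ∅ := (fact_free a ha a' ha').1 hs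
        have h2 : uIcc a c ∩ B = ∅ := (fact_free a ha c ⟨hcA, hcB⟩).1 hsc
        refine (fact_free a' ha' c ⟨hcA, hcB⟩).2 ?_
        rw [eq_empty_iff_forall_notMem]
        rintro x ⟨hx1, hx2⟩
        rcases uIcc_subset_uIcc_union_uIcc (b := a) hx1 with h | h
        · rw [uIcc_comm] at h
          exact (eq_empty_iff_forall_notMem.1 h1) x ⟨h, hx2⟩
        · exact (eq_empty_iff_forall_notMem.1 h2) x ⟨h, hx2⟩
    intro a ha a' ha' hs
    have hs' : Sim A B a' a := by
      rw [sim_iff] at hs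
      rw [sim_iff, uIcc_comm]
      exact hs
    ext c
    simp only [hcls, mem_setOf_eq]
    exact ⟨fun ⟨h1, h2⟩ => ⟨h1, key a ha a' ha' hs c h1 h2⟩,
      fun ⟨h1, h2⟩ => ⟨h1, key a' ha' a ha hs' c h1 h2⟩⟩
  -- main argument
  by_contra hinf
  have h1 : {s : Set Ordinal | ∃ a ∈ A, s = cls a} ⊆
      insert (A ∩ B) {s : Set Ordinal | ∃ a ∈ A \ B, s = cls a} := by
    rintro s ⟨a, haA, rfl⟩
    by_cases haB : a ∈ B
    · exact Or.inl (fact_in a ⟨haA, haB⟩)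
    · exact Or.inr ⟨a, ⟨haA, haB⟩, rfl⟩
  have hC' : {s : Set Ordinal | ∃ a ∈ A \ B, s = cls a}.Infinite := by
    intro hfin
    exact hinf (Set.Finite.subset (hfin.insert (A ∩ B)) h1)
  -- the set of minima of classes
  set M : Set Ordinal := {a | a ∈ A \ B ∧ ∀ a' ∈ A \ B, cls a' = cls a → a ≤ a'} with hM
  have himg : {s : Set Ordinal | ∃ a ∈ A \ B, s = cls a} = cls '' M := by
    ext s
    constructor
    · rintro ⟨a, ha, rfl⟩
      have hT : {x : Ordinal | x ∈ A \ B ∧ cls x = cls a}.Nonempty := ⟨a, ha, rfl⟩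
      obtain ⟨m, ⟨hm1, hm2⟩, hmin⟩ := wellFounded_lt.has_min _ hT
      refine ⟨m, ⟨hm1, ?_⟩, hm2⟩
      intro a' ha' hcls
      have : a' ∈ {x : Ordinal | x ∈ A \ B ∧ cls x = cls a} := ⟨ha', hcls.trans hm2⟩
      exact not_lt.1 (hmin a' this)
    · rintro ⟨m, hm, rfl⟩
      exact ⟨m, hm.1, rfl⟩
  have hMinf : M.Infinite := Set.Infinite.of_image cls (himg ▸ hC')
  have hMsub : M ⊆ A \ B := fun x hx => hx.1
  have hsep : ∀ x ∈ M, ∀ y ∈ M, x ≠ y → (uIcc x y ∩ B).Nonempty := by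
    intro x hx y hy hne
    rw [nonempty_iff_ne_empty]
    intro hemp
    have hsim : Sim A B x y := (fact_free x hx.1 y hy.1).2 hemp
    have hcxy : cls x = cls y := fact_trans x hx.1 y hy.1 hsim
    exact hne (le_antisymm (hx.2 y hy.1 hcxy.symm) (hy.2 x hx.1 hcxy))
  -- extract a strictly increasing sequence in M
  have e := hMinf.natEmbedding
  set f : ℕ → Ordinal := fun n => (e n : Ordinal) with hf
  have hfM : ∀ n, f n ∈ M := fun n => (e n).2
  have hfinj : Function.Injective f := fun m n h => e.injective (Subtype.ext h)
  have hpwo : M.IsPWO := (Set.IsWF.isPWO (wellFounded_lt.wellFoundedOn))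
  obtain ⟨g, hg⟩ := hpwo.exists_monotone_subseq hfM
  set a : ℕ → Ordinal := f ∘ g with ha
  have haM : ∀ n, a n ∈ M := fun n => hfM (g n)
  have hainj : Function.Injective a := hfinj.comp g.injective
  have hamono : StrictMono a := hg.strictMono_of_injective hainj
  -- choose separating points of B
  have hbex : ∀ n : ℕ, ∃ x, x ∈ B ∧ a n ≤ x ∧ x ≤ a (n + 1) := by
    intro n
    obtain ⟨x, hx1, hx2⟩ := hsep (a n) (haM n) (a (n + 1)) (haM (n + 1))
      (ne_of_lt (hamono (Nat.lt_succ_self n)))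
    rw [uIcc_of_le (le_of_lt (hamono (Nat.lt_succ_self n)))] at hx1
    exact ⟨x, hx2, (mem_Icc.1 hx1).1, (mem_Icc.1 hx1).2⟩
  choose b hbB hb1 hb2 using hbex
  -- the common supremum
  set γ : Ordinal := sSup (range a) with hγ
  have hbdda : BddAbove (range a) := Ordinal.bddAbove_range a
  have hbddb : BddAbove (range b) := Ordinal.bddAbove_range b
  have haγ : ∀ n, a n ≤ γ := fun n => le_csSup hbdda (mem_range_self n)
  have hγA : γ ∈ A := hAcl (range a)
    (by rintro _ ⟨n, rfl⟩; exact (haM n).1.1) ⟨a 0, mem_range_self 0⟩ hbdda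
  have hsupb : sSup (range b) = γ := by
    apply le_antisymm
    · exact csSup_le ⟨b 0, mem_range_self 0⟩
        (by rintro _ ⟨n, rfl⟩; exact le_trans (hb2 n) (haγ (n + 1)))
    · exact csSup_le ⟨a 0, mem_range_self 0⟩
        (by rintro _ ⟨n, rfl⟩; exact le_trans (hb1 n) (le_csSup hbddb (mem_range_self n)))
  have hγB : γ ∈ B := by
    rw [← hsupb]
    exact hBcl (range b) (by rintro _ ⟨n, rfl⟩; exact hbB n) ⟨b 0, mem_range_self 0⟩ hbddb
  exact (haM 0).1.2 (hA.2 (a 0) (haM 0).1.1 γ ⟨hγA, hγB⟩ (haγ 0)).2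

/-- If `A`, `B` are countable closed sets of ordinals whose intersection is an
initial segment of both, then the decomposition of `A` into `∼`-classes (and likewise of
`B`) has only finitely many classes. -/
theorem statement5 (A B : Set Ordinal)
    (hAc : A.Countable) (hBc : B.Countable)
    (hAcl : OrdClosed A) (hBcl : OrdClosed B)
    (hA : InitSegOf (A ∩ B) A) (hB : InitSegOf (A ∩ B) B) :
    {s : Set Ordinal | ∃ a ∈ A, s = {b ∈ A | Sim A B a b}}.Finite ∧
    {s : Set Ordinal | ∃ b ∈ B, s = {c ∈ B | Sim B A b c}}.Finite := by
  refine ⟨aux5 A B hAc hAcl hBcl hA, aux5 B A hBc hBcl hAcl ?_⟩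
  rwa [Set.inter_comm] at hB
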